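/- Let U_1, …, U_m be nonempty closed convex sets in R^n with nonempty intersection U, and let (ε_k) ⊂ [0,1) with sup_k ε_k < 1. Let (x_k) be generated by A3PM: x_{k+1} is an ε_k-approximate projection of x_k onto Ω̂_k = ∩_i Ŝ_{ik}, where Ŝ_{ik} = {z : ⟨x_k − p̂_{ik}, z − p̂_{ik}⟩ ≤ 0} and each p̂_{ik} is an ε_k-approximate projection of x_k onto U_i. Then for every u ∈ U, ‖u − x_k‖² ≥ (1 − ε_k)⁴ max_i dist(x_k, U_i)² + ‖u − x_{k+1}‖², and consequently max_{1≤i≤m} dist(x_k, U_i) → 0. -/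

import Mathlib

open Metric Filter Topology

/-- `xhat` is an `ε`-approximate projection of `x` onto `X`. -/
def ApproxProj {n : ℕ} (X : Set (EuclideanSpace ℝ (Fin n)))
    (x xhat : EuclideanSpace ℝ (Fin n)) (ε : ℝ) : Prop :=
  Metric.infDist xhat X ≤ ε * Metric.infDist x X ∧
    ∀ z ∈ X, inner ℝ (z - xhat) (x - xhat) ≤ (0 : ℝ)

/-- Fejér-type estimate and vanishing setwise distance for A3PM. -/
theorem stmt17 {n m : ℕ} (hm : 0 < m) (U : Fin m → Set (EuclideanSpace ℝ (Fin n)))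
    (hne : ∀ i, (U i).Nonempty) (hcl : ∀ i, IsClosed (U i)) (hcv : ∀ i, Convex ℝ (U i))
    (hU : (⋂ i, U i).Nonempty)
    (ε : ℕ → ℝ) (hε : ∀ k, ε k ∈ Set.Ico (0 : ℝ) 1) (hsup : (⨆ k, ε k) < 1)
    (x : ℕ → EuclideanSpace ℝ (Fin n)) (p : ℕ → Fin m → EuclideanSpace ℝ (Fin n))
    (hp : ∀ k i, ApproxProj (U i) (x k) (p k i) (ε k))
    (hstep : ∀ k, ApproxProj
      (⋂ i, {z : EuclideanSpace ℝ (Fin n) | inner ℝ (x k - p k i) (z - p k i) ≤ (0 : ℝ)})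
      (x k) (x (k + 1)) (ε k)) :
    (∀ u ∈ ⋂ i, U i, ∀ k,
        ‖u - x k‖ ^ 2 ≥
          (1 - ε k) ^ 4 * (⨆ i : Fin m, Metric.infDist (x k) (U i)) ^ 2 +
            ‖u - x (k + 1)‖ ^ 2) ∧
      Tendsto (fun k => ⨆ i : Fin m, Metric.infDist (x k) (U i)) atTop (nhds 0) := by
  haveI : Nonempty (Fin m) := Fin.pos_iff_nonempty.mp hm
  set Ω : ℕ → Set (EuclideanSpace ℝ (Fin n)) := fun k =>
    ⋂ i, {z : EuclideanSpace ℝ (Fin n) | inner ℝ (x k - p k i) (z - p k i) ≤ (0 : ℝ)} with hΩ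
  set M : ℕ → ℝ := fun k => ⨆ i : Fin m, Metric.infDist (x k) (U i) with hMdef
  have hMnn : ∀ k, 0 ≤ M k := fun k => Real.iSup_nonneg fun i => infDist_nonneg
  -- U ⊆ Ω k
  have hUΩ : ∀ k, (⋂ i, U i) ⊆ Ω k := by
    intro k u hu
    refine Set.mem_iInter.mpr fun i => ?_
    have hui : u ∈ U i := Set.mem_iInter.mp hu i
    have h := (hp k i).2 u hui
    show inner ℝ (x k - p k i) (u - p k i) ≤ (0 : ℝ)
    rw [real_inner_comm]; exact h
  obtain ⟨u0, hu0⟩ := hU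
  have hΩne : ∀ k, (Ω k).Nonempty := fun k => ⟨u0, hUΩ k hu0⟩
  -- Step A: (1 - ε k) * infDist (x k) (U i) ≤ dist (x k) (p k i)
  have stepA : ∀ k i, (1 - ε k) * Metric.infDist (x k) (U i) ≤ dist (x k) (p k i) := by
    intro k i
    have h1 : Metric.infDist (x k) (U i) ≤ Metric.infDist (p k i) (U i) + dist (x k) (p k i) :=
      Metric.infDist_le_infDist_add_dist
    have h2 := (hp k i).1
    linarith
  -- Step B: dist (x k) (p k i) ≤ dist (x k) z for z ∈ Ω k
  have stepB : ∀ k i, ∀ z ∈ Ω k, dist (x k) (p k i) ≤ dist (x k) z := by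
    intro k i z hz
    have hzi : inner ℝ (x k - p k i) (z - p k i) ≤ (0 : ℝ) := Set.mem_iInter.mp hz i
    set a := x k - p k i with ha
    have hexp : inner ℝ a (x k - z) = ‖a‖ ^ 2 - inner ℝ a (z - p k i) := by
      have : x k - z = a - (z - p k i) := by rw [ha]; abel
      rw [this, inner_sub_right, real_inner_self_eq_norm_sq]
    have h1 : ‖a‖ ^ 2 ≤ inner ℝ a (x k - z) := by rw [hexp]; linarith
    have h2 : inner ℝ a (x k - z) ≤ ‖a‖ * ‖x k - z‖ := real_inner_le_norm a (x k - z)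
    rw [dist_eq_norm, dist_eq_norm, ← ha]
    nlinarith [norm_nonneg a, norm_nonneg (x k - z)]
  -- Step C: (1 - ε k) * M k ≤ infDist (x k) (Ω k)
  have stepC : ∀ k, (1 - ε k) * M k ≤ Metric.infDist (x k) (Ω k) := by
    intro k
    have hεk := hε k
    have hpos : (0 : ℝ) < 1 - ε k := by simpa using hεk.2
    have hle : M k ≤ Metric.infDist (x k) (Ω k) / (1 - ε k) := by
      refine ciSup_le fun i => ?_
      rw [le_div_iff₀ hpos]
      have hd : dist (x k) (p k i) ≤ Metric.infDist (x k) (Ω k) := by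
        by_contra h
        push_neg at h
        obtain ⟨z, hz, hlt⟩ := (Metric.infDist_lt_iff (hΩne k)).mp h
        exact absurd hlt (not_lt.mpr (stepB k i z hz))
      calc Metric.infDist (x k) (U i) * (1 - ε k)
          = (1 - ε k) * Metric.infDist (x k) (U i) := by ring
        _ ≤ dist (x k) (p k i) := stepA k i
        _ ≤ _ := hd
    calc (1 - ε k) * M k ≤ (1 - ε k) * (Metric.infDist (x k) (Ω k) / (1 - ε k)) := by
          exact mul_le_mul_of_nonneg_left hle hpos.le
      _ = Metric.infDist (x k) (Ω k) := by field_simp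
  -- Step E: (1 - ε k)^2 * M k ≤ dist (x k) (x (k+1))
  have stepE : ∀ k, (1 - ε k) ^ 2 * M k ≤ dist (x k) (x (k + 1)) := by
    intro k
    have hεk := hε k
    have h1 : Metric.infDist (x k) (Ω k) ≤
        Metric.infDist (x (k + 1)) (Ω k) + dist (x k) (x (k + 1)) :=
      Metric.infDist_le_infDist_add_dist
    have h2 := (hstep k).1
    have h3 : (1 - ε k) * Metric.infDist (x k) (Ω k) ≤ dist (x k) (x (k + 1)) := by linarith
    have h4 := stepC k
    have hpos : (0 : ℝ) ≤ 1 - ε k := by linarith [hεk.2]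
    nlinarith [hMnn k]
  -- Main key inequality
  have key : ∀ u ∈ ⋂ i, U i, ∀ k,
      ‖u - x k‖ ^ 2 ≥ (1 - ε k) ^ 4 * M k ^ 2 + ‖u - x (k + 1)‖ ^ 2 := by
    intro u hu k
    have huΩ : u ∈ Ω k := hUΩ k hu
    have hin : inner ℝ (u - x (k + 1)) (x k - x (k + 1)) ≤ (0 : ℝ) := (hstep k).2 u huΩ
    have hexp : ‖u - x k‖ ^ 2 =
        ‖u - x (k + 1)‖ ^ 2 - 2 * inner ℝ (u - x (k + 1)) (x k - x (k + 1))
          + ‖x k - x (k + 1)‖ ^ 2 := by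
      have h : u - x k = (u - x (k + 1)) - (x k - x (k + 1)) := by abel
      rw [h, norm_sub_sq_real]
    have hd : (1 - ε k) ^ 2 * M k ≤ ‖x k - x (k + 1)‖ := by
      simpa [dist_eq_norm] using stepE k
    have hεk := hε k
    have hpos : (0 : ℝ) ≤ 1 - ε k := by linarith [hεk.2]
    nlinarith [hMnn k, norm_nonneg (x k - x (k + 1)),
      mul_self_le_mul_self (mul_nonneg (sq_nonneg _) (hMnn k)) hd]
  refine ⟨fun u hu k => key u hu k, ?_⟩
  -- Convergence part
  set E := ⨆ k, ε k with hE
  have hbdd : BddAbove (Set.range ε) := ⟨1, by rintro y ⟨k, rfl⟩; exact (hε k).2.le⟩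
  have hεE : ∀ k, ε k ≤ E := fun k => le_ciSup hbdd k
  have hEnn : 0 ≤ E := le_trans (hε 0).1 (hεE 0)
  have h1E : (0 : ℝ) < 1 - E := by linarith
  have hc : (0 : ℝ) < (1 - E) ^ 4 := by positivity
  set a : ℕ → ℝ := fun k => ‖u0 - x k‖ ^ 2 with hadef
  have hkey2 : ∀ k, (1 - E) ^ 4 * M k ^ 2 ≤ a k - a (k + 1) := by
    intro k
    have h := key u0 hu0 k
    have h14 : (1 - E) ^ 4 ≤ (1 - ε k) ^ 4 := by
      have h1 : (0:ℝ) ≤ 1 - E := by linarith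
      have h2 : 1 - E ≤ 1 - ε k := by linarith [hεE k]
      exact pow_le_pow_left₀ h1 h2 4
    have := mul_le_mul_of_nonneg_right h14 (sq_nonneg (M k))
    simp only [hadef]
    linarith
  have hanti : Antitone a := antitone_nat_of_succ_le fun k => by
    have := hkey2 k
    nlinarith [hMnn k, sq_nonneg (M k), hc.le]
  have hbddb : BddBelow (Set.range a) := ⟨0, by rintro y ⟨k, rfl⟩; positivity⟩
  have hconv : Tendsto a atTop (nhds (⨅ k, a k)) := tendsto_atTop_ciInf hanti hbddb
  have hconv' : Tendsto (fun k => a (k + 1)) atTop (nhds (⨅ k, a k)) :=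
    hconv.comp (tendsto_add_atTop_nat 1)
  have hdiff : Tendsto (fun k => a k - a (k + 1)) atTop (nhds 0) := by
    simpa using hconv.sub hconv'
  have hsq : Tendsto (fun k => (1 - E) ^ 4 * M k ^ 2) atTop (nhds 0) := by
    refine squeeze_zero (fun k => by positivity) (fun k => hkey2 k) hdiff
  have hM2 : Tendsto (fun k => M k ^ 2) atTop (nhds 0) := by
    have := hsq.const_mul ((1 - E) ^ 4)⁻¹
    simp only [← mul_assoc, inv_mul_cancel₀ (ne_of_gt hc), one_mul, mul_zero] at this
    exact this
  have hMt : Tendsto M atTop (nhds 0) := by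
    have hs : Tendsto (fun k => Real.sqrt (M k ^ 2)) atTop (nhds (Real.sqrt 0)) :=
      (Real.continuous_sqrt.tendsto 0).comp hM2
    simpa [Real.sqrt_sq (hMnn _), Real.sqrt_zero] using hs
  exact hMt
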